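/- Let {x_k} be generated by the TRFD algorithm and suppose T ≥ 1 satisfies ψ_{p,Δ_*}(x_k) > ε for k = 0,...,T−1 (equivalently, 1 ≤ T ≤ T_g(ε)). Then |(U² ∪ U³) ∩ {0,...,T−1}| ≤ log₂(4 L_{h,p} max{σ, L_J} c_{p,2}(m) c_{2,p}(n)² Δ_0 / ((1−α)θ) · ε^{−1}) + |S ∩ {0,...,T−1}|. -/

import Mathlib

open scoped ENNReal

noncomputable section

/-- The `p`-norm on `ℝ^n`, for `p ∈ [1,∞]`. -/
def pNorm (p : ℝ≥0∞) {n : ℕ} (x : Fin n → ℝ) : ℝ :=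
  if p = ∞ then ⨆ i, |x i| else (∑ i, |x i| ^ p.toReal) ^ (1 / p.toReal)

/-- The Euclidean norm on `ℝ^n`. -/
def eucNorm {n : ℕ} (x : Fin n → ℝ) : ℝ := Real.sqrt (∑ i, x i ^ 2)

/-- The operator norm of a matrix, induced by Euclidean norms. -/
def opNorm2 {m n : ℕ} (A : Matrix (Fin m) (Fin n) ℝ) : ℝ :=
  sSup ((fun v => eucNorm (A.mulVec v)) '' {v | eucNorm v ≤ 1})

/-- Forward finite-difference approximation of the Jacobian of `F` at `x` with stepsize `τ`:
the `j`-th column is `(F (x + τ e_j) - F x) / τ`. -/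
def fdMatrix {n m : ℕ} (F : (Fin n → ℝ) → (Fin m → ℝ)) (x : Fin n → ℝ) (τ : ℝ) :
    Matrix (Fin m) (Fin n) ℝ :=
  Matrix.of fun i j => (F (x + Pi.single j τ) i - F x i) / τ

/-- Stationarity measure `ψ_{p,r}(x)`. -/
def psi {n m : ℕ} (Ω : Set (Fin n → ℝ)) (F : (Fin n → ℝ) → (Fin m → ℝ))
    (h : (Fin m → ℝ) → ℝ) (J : (Fin n → ℝ) → Matrix (Fin m) (Fin n) ℝ)
    (p : ℝ≥0∞) (r : ℝ) (x : Fin n → ℝ) : ℝ :=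
  r⁻¹ * (h (F x) -
    sInf ((fun s => h (F x + (J x).mulVec s)) '' {s | x + s ∈ Ω ∧ pNorm p s ≤ r}))

/-- Approximate stationarity measure `η_{p,r}(x; A)`. -/
def eta {n m : ℕ} (Ω : Set (Fin n → ℝ)) (F : (Fin n → ℝ) → (Fin m → ℝ))
    (h : (Fin m → ℝ) → ℝ) (p : ℝ≥0∞) (r : ℝ) (x : Fin n → ℝ)
    (A : Matrix (Fin m) (Fin n) ℝ) : ℝ :=
  r⁻¹ * (h (F x) -
    sInf ((fun s => h (F x + A.mulVec s)) '' {s | x + s ∈ Ω ∧ pNorm p s ≤ r}))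

/-- The TRFD algorithm: `x`, `τ`, `Δ`, `A`, `d`, `ρ` are the iterates, finite-difference
stepsizes, trust-region radii, finite-difference Jacobian approximations, trial steps and
ratios generated by TRFD with parameters `ε, σ, α, θ, Δstar` from the point `x 0`. -/
def TRFDrun {n m : ℕ} (Ω : Set (Fin n → ℝ)) (F : (Fin n → ℝ) → (Fin m → ℝ))
    (h : (Fin m → ℝ) → ℝ) (p : ℝ≥0∞)
    (Lh cpm cnp ε σ α θ Δstar : ℝ)
    (x : ℕ → Fin n → ℝ) (τ Δ : ℕ → ℝ) (A : ℕ → Matrix (Fin m) (Fin n) ℝ)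
    (d : ℕ → Fin n → ℝ) (ρ : ℕ → ℝ) : Prop :=
  x 0 ∈ Ω ∧
  τ 0 = ε / (Lh * σ * cpm * cnp * Real.sqrt n) ∧
  τ 0 * Real.sqrt n ≤ Δ 0 ∧ Δ 0 ≤ Δstar ∧
  (∀ k, A k = fdMatrix F (x k) (τ k)) ∧
  (∀ k,
    -- unsuccessful iteration of type I
    (eta Ω F h p Δstar (x k) (A k) < ε / 2 ∧
      x (k + 1) = x k ∧ Δ (k + 1) = Δ k ∧ τ (k + 1) = τ k / 2) ∨
    (ε / 2 ≤ eta Ω F h p Δstar (x k) (A k) ∧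
      -- the trial step is feasible and achieves a `θ`-fraction of the optimal model decrease
      pNorm p (d k) ≤ Δ k ∧ x k + d k ∈ Ω ∧
      θ * (h (F (x k)) -
          sInf ((fun s => h (F (x k) + (A k).mulVec s)) ''
            {s | x k + s ∈ Ω ∧ pNorm p s ≤ Δ k})) ≤
        h (F (x k)) - h (F (x k) + (A k).mulVec (d k)) ∧
      ρ k = (h (F (x k)) - h (F (x k + d k))) /
            (h (F (x k)) - h (F (x k) + (A k).mulVec (d k))) ∧
      -- successful iteration
      ((α ≤ ρ k ∧ x (k + 1) = x k + d k ∧ Δ (k + 1) = min (2 * Δ k) Δstar ∧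
          τ (k + 1) = τ k) ∨
      -- unsuccessful iteration of type II
       (ρ k < α ∧ τ k * Real.sqrt n ≤ Δ k / 2 ∧
          x (k + 1) = x k ∧ Δ (k + 1) = Δ k / 2 ∧ τ (k + 1) = τ k) ∨
      -- unsuccessful iteration of type III
       (ρ k < α ∧ Δ k / 2 < τ k * Real.sqrt n ∧
          x (k + 1) = x k ∧ Δ (k + 1) = Δ k / 2 ∧ τ (k + 1) = τ k / 2))))

section helpers

lemma eucNorm_eq_norm {n : ℕ} (v : Fin n → ℝ) :
    eucNorm v = ‖(WithLp.equiv 2 (Fin n → ℝ)).symm v‖ := by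
  rw [EuclideanSpace.norm_eq]; simp [eucNorm, sq_abs]

lemma eucNorm_nonneg {n : ℕ} (v : Fin n → ℝ) : 0 ≤ eucNorm v := Real.sqrt_nonneg _

lemma eucNorm_smul {n : ℕ} (c : ℝ) (v : Fin n → ℝ) : eucNorm (c • v) = |c| * eucNorm v := by
  simp only [eucNorm_eq_norm]
  rw [show (WithLp.equiv 2 (Fin n → ℝ)).symm (c • v) = c • (WithLp.equiv 2 (Fin n → ℝ)).symm v from rfl]
  rw [norm_smul]; simp

lemma eucNorm_add_le {n : ℕ} (v w : Fin n → ℝ) : eucNorm (v + w) ≤ eucNorm v + eucNorm w := by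
  simp only [eucNorm_eq_norm]
  rw [show (WithLp.equiv 2 (Fin n → ℝ)).symm (v + w)
      = (WithLp.equiv 2 (Fin n → ℝ)).symm v + (WithLp.equiv 2 (Fin n → ℝ)).symm w from rfl]
  exact norm_add_le _ _

def frob {m n : ℕ} (A : Matrix (Fin m) (Fin n) ℝ) : ℝ := Real.sqrt (∑ i, ∑ j, A i j ^ 2)

lemma frob_nonneg {m n : ℕ} (A : Matrix (Fin m) (Fin n) ℝ) : 0 ≤ frob A := Real.sqrt_nonneg _

lemma eucNorm_mulVec_le_frob {m n : ℕ} (A : Matrix (Fin m) (Fin n) ℝ) (v : Fin n → ℝ) :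
    eucNorm (A.mulVec v) ≤ frob A * eucNorm v := by
  rw [eucNorm, frob, eucNorm, ← Real.sqrt_mul (by positivity)]
  apply Real.sqrt_le_sqrt
  rw [Finset.sum_mul]
  apply Finset.sum_le_sum
  intro i _
  calc (A.mulVec v i) ^ 2 = (∑ j, A i j * v j) ^ 2 := by rfl
    _ ≤ (∑ j, A i j ^ 2) * (∑ j, v j ^ 2) := Finset.sum_mul_sq_le_sq_mul_sq _ _ _

lemma eucNorm_mulVec_le_opNorm2 {m n : ℕ} (A : Matrix (Fin m) (Fin n) ℝ) (v : Fin n → ℝ) :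
    eucNorm (A.mulVec v) ≤ opNorm2 A * eucNorm v := by
  have hbdd : BddAbove ((fun v => eucNorm (A.mulVec v)) '' {v | eucNorm v ≤ 1}) := by
    refine ⟨frob A, ?_⟩
    rintro y ⟨w, hw, rfl⟩
    calc eucNorm (A.mulVec w) ≤ frob A * eucNorm w := eucNorm_mulVec_le_frob A w
      _ ≤ frob A * 1 := mul_le_mul_of_nonneg_left hw (frob_nonneg A)
      _ = frob A := mul_one _
  rcases eq_or_lt_of_le (eucNorm_nonneg v) with h0 | h0
  · have hv : v = 0 := by
      have hz : ∑ i, v i ^ 2 = 0 := by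
        by_contra hne
        have hpos : 0 < ∑ i, v i ^ 2 := lt_of_le_of_ne (by positivity) (Ne.symm hne)
        have := Real.sqrt_pos.mpr hpos
        rw [eucNorm] at h0; linarith
      funext i
      have := (Finset.sum_eq_zero_iff_of_nonneg (fun i _ => sq_nonneg (v i))).mp hz i
        (Finset.mem_univ i)
      exact pow_eq_zero_iff (two_ne_zero) |>.mp this
    subst hv
    simp only [Matrix.mulVec_zero]
    have : eucNorm (0 : Fin m → ℝ) = 0 := by simp [eucNorm]
    rw [this, ← h0, mul_zero]
  · set c := eucNorm v with hc
    have hmem : eucNorm (c⁻¹ • v) ≤ 1 := by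
      rw [eucNorm_smul, abs_of_pos (inv_pos.mpr h0), ← hc, inv_mul_cancel₀ (ne_of_gt h0)]
    have hle : eucNorm (A.mulVec (c⁻¹ • v)) ≤ opNorm2 A :=
      le_csSup hbdd ⟨c⁻¹ • v, hmem, rfl⟩
    have hmv : A.mulVec (c⁻¹ • v) = c⁻¹ • A.mulVec v := by rw [Matrix.mulVec_smul]
    rw [hmv, eucNorm_smul, abs_of_pos (inv_pos.mpr h0)] at hle
    calc eucNorm (A.mulVec v) = c * (c⁻¹ * eucNorm (A.mulVec v)) := by field_simp
      _ ≤ c * opNorm2 A := mul_le_mul_of_nonneg_left hle (le_of_lt h0)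
      _ = opNorm2 A * c := mul_comm _ _

lemma toReal_one_le {p : ℝ≥0∞} (hp : 1 ≤ p) (hne : p ≠ ∞) : 1 ≤ p.toReal := by
  have := ENNReal.toReal_mono hne hp
  simpa using this

lemma pNorm_zero {n : ℕ} (hn : 1 ≤ n) {p : ℝ≥0∞} (hp : 1 ≤ p) :
    pNorm p (0 : Fin n → ℝ) = 0 := by
  unfold pNorm
  split_ifs with hinf
  · have : Nonempty (Fin n) := ⟨⟨0, hn⟩⟩
    simp
  · have hq := toReal_one_le hp hinf
    have hq0 : p.toReal ≠ 0 := by linarith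
    simp [Real.zero_rpow hq0, one_div, Real.zero_rpow (inv_ne_zero hq0)]

lemma pNorm_neg {n : ℕ} (p : ℝ≥0∞) (v : Fin n → ℝ) : pNorm p (-v) = pNorm p v := by
  unfold pNorm
  split_ifs <;> simp [abs_neg]

lemma pNorm_smul {n : ℕ} {p : ℝ≥0∞} (hp : 1 ≤ p) {t : ℝ} (ht : 0 ≤ t) (v : Fin n → ℝ) :
    pNorm p (t • v) = t * pNorm p v := by
  unfold pNorm
  split_ifs with hinf
  · have habs : ∀ i, |(t • v) i| = t * |v i| := by
      intro i; simp [abs_mul, abs_of_nonneg ht]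
    simp only [habs]
    exact (Real.mul_iSup_of_nonneg ht _).symm
  · have hq := toReal_one_le hp hinf
    have hq0 : p.toReal ≠ 0 := by linarith
    have h1 : ∀ i, |(t • v) i| ^ p.toReal = t ^ p.toReal * |v i| ^ p.toReal := by
      intro i
      rw [show (t • v) i = t * v i from rfl, abs_mul, abs_of_nonneg ht,
        Real.mul_rpow ht (abs_nonneg _)]
    simp only [h1, ← Finset.mul_sum]
    rw [Real.mul_rpow (Real.rpow_nonneg ht _)
      (Finset.sum_nonneg fun i _ => Real.rpow_nonneg (abs_nonneg _) _)]
    congr 1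
    rw [← Real.rpow_mul ht, mul_one_div, div_self hq0, Real.rpow_one]

lemma pNorm_nonneg {n : ℕ} {p : ℝ≥0∞} (v : Fin n → ℝ) : 0 ≤ pNorm p v := by
  unfold pNorm
  split_ifs with hinf
  · rcases isEmpty_or_nonempty (Fin n) with he | hne
    · simp [Real.iSup_of_isEmpty]
    · exact le_ciSup_of_le (Set.Finite.bddAbove (Set.finite_range _)) (Classical.arbitrary _)
        (abs_nonneg _)
  · exact Real.rpow_nonneg (Finset.sum_nonneg fun i _ => Real.rpow_nonneg (abs_nonneg _) _) _

end helpers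
section taylor

/-- Taylor estimate with the sharp 1/2 constant. -/
lemma taylor_bound {n m : ℕ}
    (F : (Fin n → ℝ) → (Fin m → ℝ)) (J : (Fin n → ℝ) → Matrix (Fin m) (Fin n) ℝ)
    (hJ : ∀ y, HasFDerivAt F (LinearMap.toContinuousLinearMap (Matrix.mulVecLin (J y))) y)
    (LJ : ℝ) (hLJ : 0 < LJ)
    (hJLip : ∀ y z, opNorm2 (J y - J z) ≤ LJ * eucNorm (y - z))
    (x d : Fin n → ℝ) :
    eucNorm (F (x + d) - F x - (J x).mulVec d) ≤ LJ / 2 * eucNorm d ^ 2 := by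
  set toE : (Fin m → ℝ) ≃L[ℝ] EuclideanSpace ℝ (Fin m) :=
    (PiLp.continuousLinearEquiv 2 ℝ (fun _ : Fin m => ℝ)).symm with htoE
  have hnormE : ∀ v : Fin m → ℝ, ‖toE v‖ = eucNorm v := fun v => (eucNorm_eq_norm v).symm
  set g : ℝ → EuclideanSpace ℝ (Fin m) := fun t => toE (F (x + t • d)) with hg
  set g' : ℝ → EuclideanSpace ℝ (Fin m) := fun t => toE ((J (x + t • d)).mulVec d) with hg'
  have hderiv : ∀ t : ℝ, HasDerivAt g (g' t) t := by
    intro t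
    have hc : HasDerivAt (fun t : ℝ => x + t • d) d t := by
      simpa using ((hasDerivAt_id t).smul_const d).const_add x
    have h1 : HasDerivAt (fun t : ℝ => F (x + t • d))
        ((Matrix.mulVecLin (J (x + t • d))).toContinuousLinearMap d) t :=
      (hJ (x + t • d)).comp_hasDerivAt t hc
    have h2 := (toE.hasFDerivAt.comp_hasDerivAt t h1)
    exact h2
  have hg'bound : ∀ t : ℝ, ‖g' t - g' 0‖ ≤ LJ * |t| * eucNorm d ^ 2 := by
    intro t
    have heq : g' t - g' 0 = toE (((J (x + t • d)) - J x).mulVec d) := by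
      simp [g', Matrix.sub_mulVec, map_sub]
    rw [heq, hnormE]
    calc eucNorm (((J (x + t • d)) - J x).mulVec d)
        ≤ opNorm2 ((J (x + t • d)) - J x) * eucNorm d := eucNorm_mulVec_le_opNorm2 _ _
      _ ≤ (LJ * eucNorm (x + t • d - x)) * eucNorm d :=
          mul_le_mul_of_nonneg_right (hJLip _ _) (eucNorm_nonneg d)
      _ = LJ * |t| * eucNorm d ^ 2 := by
          rw [show x + t • d - x = t • d by abel, eucNorm_smul]; ring
  have hg'cont : Continuous g' := by
    rw [Metric.continuous_iff]
    intro t ε hε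
    rcases eq_or_lt_of_le (eucNorm_nonneg d) with h0 | h0
    · refine ⟨1, one_pos, fun s _ => ?_⟩
      have hb : ∀ u : ℝ, ‖g' u - g' t‖ ≤ LJ * |u - t| * eucNorm d ^ 2 := by
        intro u
        have heq : g' u - g' t = toE (((J (x + u • d)) - J (x + t • d)).mulVec d) := by
          simp [g', Matrix.sub_mulVec, map_sub]
        rw [heq, hnormE]
        calc eucNorm _ ≤ opNorm2 ((J (x + u • d)) - J (x + t • d)) * eucNorm d :=
              eucNorm_mulVec_le_opNorm2 _ _
          _ ≤ (LJ * eucNorm (x + u • d - (x + t • d))) * eucNorm d :=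
              mul_le_mul_of_nonneg_right (hJLip _ _) (eucNorm_nonneg d)
          _ = LJ * |u - t| * eucNorm d ^ 2 := by
              rw [show x + u • d - (x + t • d) = (u - t) • d by
                    rw [sub_smul]; abel, eucNorm_smul]; ring
      have h2 := hb s
      rw [dist_eq_norm]
      calc ‖g' s - g' t‖ ≤ LJ * |s - t| * eucNorm d ^ 2 := h2
        _ = 0 := by rw [← h0]; ring
        _ < ε := hε
    · set K := LJ * eucNorm d ^ 2 with hK
      have hKpos : 0 < K := by positivity
      refine ⟨ε / K, by positivity, fun s hs => ?_⟩
      have heq : g' s - g' t = toE (((J (x + s • d)) - J (x + t • d)).mulVec d) := by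
        simp [g', Matrix.sub_mulVec, map_sub]
      rw [dist_eq_norm, heq, hnormE]
      calc eucNorm _ ≤ opNorm2 ((J (x + s • d)) - J (x + t • d)) * eucNorm d :=
            eucNorm_mulVec_le_opNorm2 _ _
        _ ≤ (LJ * eucNorm (x + s • d - (x + t • d))) * eucNorm d :=
            mul_le_mul_of_nonneg_right (hJLip _ _) (eucNorm_nonneg d)
        _ = K * |s - t| := by
            rw [show x + s • d - (x + t • d) = (s - t) • d by rw [sub_smul]; abel,
              eucNorm_smul, hK]; ring
        _ < K * (ε / K) := by
            apply mul_lt_mul_of_pos_left _ hKpos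
            rw [← Real.dist_eq]; exact hs
        _ = ε := by field_simp
  have hint : IntervalIntegrable g' MeasureTheory.volume 0 1 :=
    hg'cont.intervalIntegrable 0 1
  have hFTC : ∫ t in (0:ℝ)..1, g' t = g 1 - g 0 :=
    intervalIntegral.integral_eq_sub_of_hasDerivAt (fun t _ => hderiv t) hint
  have hrem : toE (F (x + d) - F x - (J x).mulVec d) = ∫ t in (0:ℝ)..1, (g' t - g' 0) := by
    rw [intervalIntegral.integral_sub hint (intervalIntegrable_const), hFTC]
    simp only [g, g']
    rw [intervalIntegral.integral_const]
    simp only [sub_zero, one_smul, zero_smul, one_smul, map_sub]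
    congr 1
    · congr 2 <;> simp
    · congr 1; simp
  have hbound : ‖∫ t in (0:ℝ)..1, (g' t - g' 0)‖ ≤ LJ / 2 * eucNorm d ^ 2 := by
    have hle : ∀ᵐ t ∂(MeasureTheory.volume.restrict (Set.uIoc (0:ℝ) 1)),
        ‖g' t - g' 0‖ ≤ LJ * eucNorm d ^ 2 * t := by
      apply MeasureTheory.ae_restrict_of_forall_mem measurableSet_uIoc
      intro t ht
      rw [Set.uIoc_of_le (zero_le_one)] at ht
      calc ‖g' t - g' 0‖ ≤ LJ * |t| * eucNorm d ^ 2 := hg'bound t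
        _ = LJ * eucNorm d ^ 2 * t := by rw [abs_of_pos ht.1]; ring
    have hintb : IntervalIntegrable (fun t => LJ * eucNorm d ^ 2 * t)
        MeasureTheory.volume 0 1 := (continuous_const.mul continuous_id).intervalIntegrable 0 1
    calc ‖∫ t in (0:ℝ)..1, (g' t - g' 0)‖
        ≤ |∫ t in (0:ℝ)..1, LJ * eucNorm d ^ 2 * t| :=
          intervalIntegral.norm_integral_le_abs_of_norm_le hle hintb
      _ = LJ / 2 * eucNorm d ^ 2 := by
          rw [intervalIntegral.integral_const_mul, integral_id]
          rw [abs_of_nonneg (by positivity)]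
          ring
  rw [← hnormE]
  calc ‖toE (F (x + d) - F x - (J x).mulVec d)‖
      = ‖∫ t in (0:ℝ)..1, (g' t - g' 0)‖ := by rw [hrem]
    _ ≤ LJ / 2 * eucNorm d ^ 2 := hbound

/-- Finite-difference Jacobian error bound. -/
lemma fd_err {n m : ℕ}
    (F : (Fin n → ℝ) → (Fin m → ℝ)) (J : (Fin n → ℝ) → Matrix (Fin m) (Fin n) ℝ)
    (hJ : ∀ y, HasFDerivAt F (LinearMap.toContinuousLinearMap (Matrix.mulVecLin (J y))) y)
    (LJ : ℝ) (hLJ : 0 < LJ)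
    (hJLip : ∀ y z, opNorm2 (J y - J z) ≤ LJ * eucNorm (y - z))
    (x : Fin n → ℝ) {τ : ℝ} (hτ : 0 < τ) (v : Fin n → ℝ) :
    eucNorm ((J x - fdMatrix F x τ).mulVec v)
      ≤ LJ * τ * Real.sqrt n / 2 * eucNorm v := by
  have hcol : ∀ j, ∑ i, (J x - fdMatrix F x τ) i j ^ 2 ≤ (LJ * τ / 2) ^ 2 := by
    intro j
    have hsingle : eucNorm (Pi.single j τ) = τ := by
      rw [eucNorm]
      have hterm : ∀ i, (Pi.single j τ : Fin n → ℝ) i ^ 2 = if i = j then τ ^ 2 else 0 := by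
        intro i; by_cases hij : i = j
        · subst hij; simp
        · simp [Pi.single_eq_of_ne hij, hij]
      rw [Finset.sum_congr rfl (fun i _ => hterm i), Finset.sum_ite_eq' _ j]
      simp [Real.sqrt_sq (le_of_lt hτ)]
    have htay := taylor_bound F J hJ LJ hLJ hJLip x (Pi.single j τ)
    rw [hsingle] at htay
    set rem := F (x + Pi.single j τ) - F x - (J x).mulVec (Pi.single j τ) with hremdef
    have hmv : (J x).mulVec (Pi.single j τ) = fun i => J x i j * τ :=
      Matrix.mulVec_single _ _ _
    have hcoleq : ∀ i, (J x - fdMatrix F x τ) i j = -(rem i / τ) := by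
      intro i
      have hri : rem i = F (x + Pi.single j τ) i - F x i - J x i j * τ := by
        rw [hremdef]
        simp [hmv]
      rw [show (J x - fdMatrix F x τ) i j = J x i j - (F (x + Pi.single j τ) i - F x i) / τ
        from rfl, hri]
      field_simp
      ring
    have hsum : ∑ i, (J x - fdMatrix F x τ) i j ^ 2 = (∑ i, rem i ^ 2) / τ ^ 2 := by
      rw [Finset.sum_div]
      apply Finset.sum_congr rfl
      intro i _
      rw [hcoleq i]
      field_simp
    have hrem2 : ∑ i, rem i ^ 2 ≤ (LJ / 2 * τ ^ 2) ^ 2 := by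
      have h2 : eucNorm rem ≤ LJ / 2 * τ ^ 2 := htay
      have h3 : eucNorm rem ^ 2 = ∑ i, rem i ^ 2 := by
        rw [eucNorm, Real.sq_sqrt (by positivity)]
      nlinarith [eucNorm_nonneg rem]
    rw [hsum, div_le_iff₀ (by positivity)]
    nlinarith
  have hfr : frob (J x - fdMatrix F x τ) ≤ LJ * τ * Real.sqrt n / 2 := by
    rw [frob]
    calc Real.sqrt (∑ i, ∑ j, (J x - fdMatrix F x τ) i j ^ 2)
        = Real.sqrt (∑ j, ∑ i, (J x - fdMatrix F x τ) i j ^ 2) := by rw [Finset.sum_comm]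
      _ ≤ Real.sqrt (∑ _j : Fin n, (LJ * τ / 2) ^ 2) :=
          Real.sqrt_le_sqrt (Finset.sum_le_sum fun j _ => hcol j)
      _ = Real.sqrt ((n : ℝ) * (LJ * τ / 2) ^ 2) := by
          rw [Finset.sum_const, Finset.card_univ, Fintype.card_fin, nsmul_eq_mul]
      _ = Real.sqrt n * (LJ * τ / 2) := by
          rw [Real.sqrt_mul (by positivity), Real.sqrt_sq (by positivity)]
      _ = LJ * τ * Real.sqrt n / 2 := by ring
  calc eucNorm ((J x - fdMatrix F x τ).mulVec v)
      ≤ frob (J x - fdMatrix F x τ) * eucNorm v := eucNorm_mulVec_le_frob _ _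
    _ ≤ LJ * τ * Real.sqrt n / 2 * eucNorm v :=
        mul_le_mul_of_nonneg_right hfr (eucNorm_nonneg v)

end taylor
/-- the model decrease over a small ball is at least a proportional fraction of that
over a big ball. -/
lemma model_decrease_scale {n m : ℕ} (hn : 1 ≤ n) {p : ℝ≥0∞} (hp : 1 ≤ p)
    {Ω : Set (Fin n → ℝ)} (hΩcv : Convex ℝ Ω)
    {h : (Fin m → ℝ) → ℝ} (hconv : ConvexOn ℝ Set.univ h)
    {Lh cpm cnp : ℝ} (hLh : 0 < Lh) (hcpm1 : 1 ≤ cpm) (hcnp1 : 1 ≤ cnp)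
    (hhLip : ∀ z w, |h z - h w| ≤ Lh * pNorm p (z - w))
    (hcnp : ∀ v : Fin n → ℝ, eucNorm v ≤ cnp * pNorm p v)
    (hcpm : ∀ z : Fin m → ℝ, pNorm p z ≤ cpm * eucNorm z)
    {x : Fin n → ℝ} (hx : x ∈ Ω) (w : Fin m → ℝ) (A : Matrix (Fin m) (Fin n) ℝ)
    {r R : ℝ} (hr : 0 < r) (hrR : r ≤ R) :
    r / R * (h w - sInf ((fun s => h (w + A.mulVec s)) '' {s | x + s ∈ Ω ∧ pNorm p s ≤ R}))
      ≤ h w - sInf ((fun s => h (w + A.mulVec s)) '' {s | x + s ∈ Ω ∧ pNorm p s ≤ r}) := by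
  have hR : 0 < R := lt_of_lt_of_le hr hrR
  set t := r / R with htdef
  have ht0 : 0 < t := div_pos hr hR
  have ht1 : t ≤ 1 := (div_le_one hR).mpr hrR
  -- bddBelow of the r-ball image
  have hbdd : BddBelow ((fun s => h (w + A.mulVec s)) '' {s | x + s ∈ Ω ∧ pNorm p s ≤ r}) := by
    refine ⟨h w - Lh * (cpm * (frob A * (cnp * r))), ?_⟩
    rintro y ⟨s, ⟨hsΩ, hsr⟩, rfl⟩
    have h1 : h w - h (w + A.mulVec s) ≤ Lh * pNorm p (A.mulVec s) := by
      have := hhLip w (w + A.mulVec s)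
      have h2 : w - (w + A.mulVec s) = -(A.mulVec s) := by abel
      rw [h2, pNorm_neg] at this
      exact le_trans (le_abs_self _) this
    have h3 : pNorm p (A.mulVec s) ≤ cpm * (frob A * (cnp * r)) := by
      calc pNorm p (A.mulVec s) ≤ cpm * eucNorm (A.mulVec s) := hcpm _
        _ ≤ cpm * (frob A * eucNorm s) := by
            apply mul_le_mul_of_nonneg_left (eucNorm_mulVec_le_frob A s) (by linarith)
        _ ≤ cpm * (frob A * (cnp * pNorm p s)) := by
            apply mul_le_mul_of_nonneg_left _ (by linarith)
            exact mul_le_mul_of_nonneg_left (hcnp s) (frob_nonneg A)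
        _ ≤ cpm * (frob A * (cnp * r)) := by
            apply mul_le_mul_of_nonneg_left _ (by linarith)
            apply mul_le_mul_of_nonneg_left _ (frob_nonneg A)
            exact mul_le_mul_of_nonneg_left hsr (by linarith)
    nlinarith [hhLip w (w + A.mulVec s)]
  -- the R-ball feasible set is nonempty
  have hne : ((fun s => h (w + A.mulVec s)) '' {s | x + s ∈ Ω ∧ pNorm p s ≤ R}).Nonempty := by
    refine ⟨h (w + A.mulVec 0), 0, ⟨by simpa using hx, ?_⟩, rfl⟩
    rw [pNorm_zero hn hp]; exact le_of_lt hR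
  -- key inequality
  have hkey2 : (sInf ((fun s => h (w + A.mulVec s)) '' {s | x + s ∈ Ω ∧ pNorm p s ≤ r})
      - (1 - t) * h w) / t
      ≤ sInf ((fun s => h (w + A.mulVec s)) '' {s | x + s ∈ Ω ∧ pNorm p s ≤ R}) := by
    apply le_csInf hne
    rintro b ⟨s, ⟨hsΩ, hsR⟩, rfl⟩
    rw [div_le_iff₀ ht0]
    have hmem : x + t • s ∈ Ω := by
      have := hΩcv hx hsΩ (by linarith : (0:ℝ) ≤ 1 - t) (le_of_lt ht0) (by ring)
      convert this using 1
      rw [smul_add]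
      module
    have hps : pNorm p (t • s) ≤ r := by
      rw [pNorm_smul hp (le_of_lt ht0)]
      calc t * pNorm p s ≤ t * R := mul_le_mul_of_nonneg_left hsR (le_of_lt ht0)
        _ = r := by rw [htdef, div_mul_cancel₀ r hR.ne']
    have hsInf : sInf ((fun s => h (w + A.mulVec s)) '' {s | x + s ∈ Ω ∧ pNorm p s ≤ r})
        ≤ h (w + A.mulVec (t • s)) := csInf_le hbdd ⟨t • s, ⟨hmem, hps⟩, rfl⟩
    have hcvx : h (w + A.mulVec (t • s)) ≤ (1 - t) * h w + t * h (w + A.mulVec s) := by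
      have harg : w + A.mulVec (t • s) = (1 - t) • w + t • (w + A.mulVec s) := by
        rw [Matrix.mulVec_smul, smul_add]
        module
      rw [harg]
      exact hconv.2 (Set.mem_univ _) (Set.mem_univ _) (by linarith) (le_of_lt ht0) (by ring)
    simp only
    nlinarith
  rw [div_le_iff₀ ht0] at hkey2
  nlinarith [hkey2]

section counting

def cnt (P : ℕ → Prop) [DecidablePred P] (k : ℕ) : ℕ := ((Finset.range k).filter P).card

lemma cnt_succ (P : ℕ → Prop) [DecidablePred P] (k : ℕ) :
    cnt P (k + 1) = cnt P k + if P k then 1 else 0 := by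
  unfold cnt
  rw [Finset.range_add_one, Finset.filter_insert]
  split_ifs
  · rw [Finset.card_insert_of_notMem (by simp)]
  · rw [add_zero]

lemma cnt_mono (P : ℕ → Prop) [DecidablePred P] {a b : ℕ} (hab : a ≤ b) :
    cnt P a ≤ cnt P b :=
  Finset.card_le_card (Finset.filter_subset_filter _ (Finset.range_subset_range.mpr hab))

lemma ncard_eq_cnt (P : ℕ → Prop) [DecidablePred P] (T : ℕ) :
    {k | k < T ∧ P k}.ncard = cnt P T := by
  rw [show {k | k < T ∧ P k} = ↑((Finset.range T).filter P) by
    ext j; simp [Finset.mem_filter, Finset.mem_range]]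
  exact Set.ncard_coe_finset _

end counting

/-- Key lemma: on a non-type-I unsuccessful iteration, the trust region radius is
bounded below. -/
lemma key_delta_bound {n m : ℕ} (hn : 1 ≤ n) {p : ℝ≥0∞} (hp : 1 ≤ p)
    {Ω : Set (Fin n → ℝ)} (hΩcv : Convex ℝ Ω)
    (F : (Fin n → ℝ) → (Fin m → ℝ)) (J : (Fin n → ℝ) → Matrix (Fin m) (Fin n) ℝ)
    (hJ : ∀ y, HasFDerivAt F (LinearMap.toContinuousLinearMap (Matrix.mulVecLin (J y))) y)
    (LJ : ℝ) (hLJ : 0 < LJ)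
    (hJLip : ∀ y z, opNorm2 (J y - J z) ≤ LJ * eucNorm (y - z))
    (h : (Fin m → ℝ) → ℝ) (hconv : ConvexOn ℝ Set.univ h)
    (Lh : ℝ) (hLh : 0 < Lh)
    (hhLip : ∀ z w, |h z - h w| ≤ Lh * pNorm p (z - w))
    (cnp cpm : ℝ) (hcnp1 : 1 ≤ cnp) (hcpm1 : 1 ≤ cpm)
    (hcnp : ∀ v : Fin n → ℝ, eucNorm v ≤ cnp * pNorm p v)
    (hcpm : ∀ z : Fin m → ℝ, pNorm p z ≤ cpm * eucNorm z)
    (ε σ α θ Δstar : ℝ) (hε : 0 < ε) (hσ : 0 < σ) (hα1 : α < 1) (hθ0 : 0 < θ)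
    (xk : Fin n → ℝ) (hxk : xk ∈ Ω) (τk Δk : ℝ) (hτk : 0 < τk)
    (hτΔ : τk * Real.sqrt n ≤ Δk) (hΔk : 0 < Δk) (hΔks : Δk ≤ Δstar)
    (dk : Fin n → ℝ) (hdp : pNorm p dk ≤ Δk) (hdΩ : xk + dk ∈ Ω)
    (hη : ε / 2 ≤ eta Ω F h p Δstar xk (fdMatrix F xk τk))
    (hθdec : θ * (h (F xk) -
        sInf ((fun s => h (F xk + (fdMatrix F xk τk).mulVec s)) ''
          {s | xk + s ∈ Ω ∧ pNorm p s ≤ Δk}))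
        ≤ h (F xk) - h (F xk + (fdMatrix F xk τk).mulVec dk))
    (hρ : (h (F xk) - h (F (xk + dk))) /
          (h (F xk) - h (F xk + (fdMatrix F xk τk).mulVec dk)) < α) :
    (1 - α) * θ * ε / (2 * Lh * max σ LJ * cpm * cnp ^ 2) < Δk := by
  set M := max σ LJ with hM
  have hMpos : 0 < M := lt_of_lt_of_le hσ (le_max_left _ _)
  have hMLJ : LJ ≤ M := le_max_right _ _
  have hΔs : 0 < Δstar := lt_of_lt_of_le hΔk hΔks
  set B := fdMatrix F xk τk with hB
  -- decrease over the big ball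
  have hX : ε / 2 * Δstar ≤ h (F xk) -
      sInf ((fun s => h (F xk + B.mulVec s)) '' {s | xk + s ∈ Ω ∧ pNorm p s ≤ Δstar}) := by
    have h2 := mul_le_mul_of_nonneg_right hη (le_of_lt hΔs)
    unfold eta at h2
    calc ε / 2 * Δstar ≤ Δstar⁻¹ * (h (F xk) -
          sInf ((fun s => h (F xk + B.mulVec s)) '' {s | xk + s ∈ Ω ∧ pNorm p s ≤ Δstar}))
          * Δstar := h2
      _ = _ := by field_simp
  -- decrease over the small ball, via scaling
  have hscale := model_decrease_scale hn hp hΩcv hconv hLh hcpm1 hcnp1 hhLip hcnp hcpm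
    hxk (F xk) B hΔk hΔks
  have hsmall : Δk * (ε / 2) ≤ h (F xk) -
      sInf ((fun s => h (F xk + B.mulVec s)) '' {s | xk + s ∈ Ω ∧ pNorm p s ≤ Δk}) := by
    have h3 : Δk / Δstar * (ε / 2 * Δstar) ≤ Δk / Δstar * (h (F xk) -
        sInf ((fun s => h (F xk + B.mulVec s)) '' {s | xk + s ∈ Ω ∧ pNorm p s ≤ Δstar})) :=
      mul_le_mul_of_nonneg_left hX (by positivity)
    have h4 : Δk / Δstar * (ε / 2 * Δstar) = Δk * (ε / 2) := by field_simp
    linarith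
  set D := h (F xk) - h (F xk + B.mulVec dk) with hD
  have hDlb : θ * (Δk * (ε / 2)) ≤ D :=
    le_trans (mul_le_mul_of_nonneg_left hsmall (le_of_lt hθ0)) hθdec
  have hDpos : 0 < D := lt_of_lt_of_le (by positivity) hDlb
  -- error lower bound from unsuccessfulness
  set act := h (F xk) - h (F (xk + dk)) with hact
  have hactlt : act < α * D := by
    have := (div_lt_iff₀ hDpos).mp hρ
    linarith
  set err := h (F (xk + dk)) - h (F xk + B.mulVec dk) with herr
  have herr_lb : (1 - α) * D < err := by
    have : err = D - act := by rw [herr, hD, hact]; ring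
    rw [this]; nlinarith
  -- error upper bound
  have hdnorm : eucNorm dk ≤ cnp * Δk := by
    calc eucNorm dk ≤ cnp * pNorm p dk := hcnp dk
      _ ≤ cnp * Δk := mul_le_mul_of_nonneg_left hdp (by linarith)
  have hdnn := eucNorm_nonneg dk
  have herr_ub : err ≤ Lh * cpm * (LJ * cnp ^ 2 * Δk ^ 2) := by
    have h5 : err ≤ Lh * pNorm p (F (xk + dk) - (F xk + B.mulVec dk)) := by
      have := hhLip (F (xk + dk)) (F xk + B.mulVec dk)
      calc err ≤ |h (F (xk + dk)) - h (F xk + B.mulVec dk)| := le_abs_self _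
        _ ≤ Lh * pNorm p (F (xk + dk) - (F xk + B.mulVec dk)) := this
    have h6 : pNorm p (F (xk + dk) - (F xk + B.mulVec dk))
        ≤ cpm * eucNorm (F (xk + dk) - (F xk + B.mulVec dk)) := hcpm _
    have h7 : F (xk + dk) - (F xk + B.mulVec dk)
        = (F (xk + dk) - F xk - (J xk).mulVec dk) + ((J xk - B).mulVec dk) := by
      rw [Matrix.sub_mulVec]; abel
    have h8 : eucNorm (F (xk + dk) - (F xk + B.mulVec dk))
        ≤ LJ / 2 * eucNorm dk ^ 2 + LJ * τk * Real.sqrt n / 2 * eucNorm dk := by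
      rw [h7]
      calc eucNorm _ ≤ eucNorm (F (xk + dk) - F xk - (J xk).mulVec dk)
            + eucNorm ((J xk - B).mulVec dk) := eucNorm_add_le _ _
        _ ≤ LJ / 2 * eucNorm dk ^ 2 + LJ * τk * Real.sqrt n / 2 * eucNorm dk := by
            gcongr
            · exact taylor_bound F J hJ LJ hLJ hJLip xk dk
            · exact fd_err F J hJ LJ hLJ hJLip xk hτk dk
    have h9 : LJ / 2 * eucNorm dk ^ 2 ≤ LJ / 2 * (cnp * Δk) ^ 2 := by
      apply mul_le_mul_of_nonneg_left _ (by positivity)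
      exact pow_le_pow_left₀ hdnn hdnorm 2
    have h10 : LJ * τk * Real.sqrt n / 2 * eucNorm dk ≤ LJ / 2 * Δk * (cnp * Δk) := by
      have h11 : LJ * τk * Real.sqrt n / 2 ≤ LJ / 2 * Δk := by
        rw [show LJ * τk * Real.sqrt n / 2 = LJ / 2 * (τk * Real.sqrt n) by ring]
        exact mul_le_mul_of_nonneg_left hτΔ (by positivity)
      have h12 : 0 ≤ LJ * τk * Real.sqrt n / 2 := by
        have : (0:ℝ) ≤ Real.sqrt n := Real.sqrt_nonneg _
        positivity
      calc LJ * τk * Real.sqrt n / 2 * eucNorm dk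
          ≤ LJ * τk * Real.sqrt n / 2 * (cnp * Δk) := by
            apply mul_le_mul_of_nonneg_left hdnorm h12
        _ ≤ LJ / 2 * Δk * (cnp * Δk) := by
            apply mul_le_mul_of_nonneg_right h11 (by positivity)
    have hcnp2 : cnp ≤ cnp ^ 2 := le_self_pow₀ (by linarith) (by norm_num)
    have hc2 : LJ / 2 * Δk ^ 2 * cnp ≤ LJ / 2 * Δk ^ 2 * cnp ^ 2 :=
      mul_le_mul_of_nonneg_left hcnp2 (by positivity)
    have h13 : LJ / 2 * (cnp * Δk) ^ 2 + LJ / 2 * Δk * (cnp * Δk)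
        ≤ LJ * cnp ^ 2 * Δk ^ 2 := by
      calc LJ / 2 * (cnp * Δk) ^ 2 + LJ / 2 * Δk * (cnp * Δk)
          = LJ / 2 * Δk ^ 2 * cnp ^ 2 + LJ / 2 * Δk ^ 2 * cnp := by ring
        _ ≤ LJ / 2 * Δk ^ 2 * cnp ^ 2 + LJ / 2 * Δk ^ 2 * cnp ^ 2 := by linarith
        _ = LJ * cnp ^ 2 * Δk ^ 2 := by ring
    calc err ≤ Lh * pNorm p (F (xk + dk) - (F xk + B.mulVec dk)) := h5
      _ ≤ Lh * (cpm * eucNorm (F (xk + dk) - (F xk + B.mulVec dk))) :=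
          mul_le_mul_of_nonneg_left h6 (le_of_lt hLh)
      _ ≤ Lh * (cpm * (LJ * cnp ^ 2 * Δk ^ 2)) := by
          apply mul_le_mul_of_nonneg_left _ (le_of_lt hLh)
          apply mul_le_mul_of_nonneg_left _ (by linarith)
          linarith
      _ = Lh * cpm * (LJ * cnp ^ 2 * Δk ^ 2) := by ring
  -- conclude
  have hchain : (1 - α) * (θ * (Δk * (ε / 2))) < Lh * cpm * (M * cnp ^ 2 * Δk ^ 2) := by
    have e1 : (1 - α) * (θ * (Δk * (ε / 2))) ≤ (1 - α) * D :=
      mul_le_mul_of_nonneg_left hDlb (by linarith)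
    have e2 : Lh * cpm * (LJ * cnp ^ 2 * Δk ^ 2) ≤ Lh * cpm * (M * cnp ^ 2 * Δk ^ 2) := by
      have : LJ * cnp ^ 2 * Δk ^ 2 ≤ M * cnp ^ 2 * Δk ^ 2 := by
        apply mul_le_mul_of_nonneg_right _ (sq_nonneg Δk)
        exact mul_le_mul_of_nonneg_right hMLJ (sq_nonneg cnp)
      apply mul_le_mul_of_nonneg_left this (by positivity)
    calc (1 - α) * (θ * (Δk * (ε / 2))) ≤ (1 - α) * D := e1
      _ < err := herr_lb
      _ ≤ Lh * cpm * (LJ * cnp ^ 2 * Δk ^ 2) := herr_ub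
      _ ≤ Lh * cpm * (M * cnp ^ 2 * Δk ^ 2) := e2
  rw [div_lt_iff₀ (by positivity)]
  have hfin : ((1 - α) * θ * ε) * Δk < (Δk * (2 * Lh * M * cpm * cnp ^ 2)) * Δk := by
    calc ((1 - α) * θ * ε) * Δk = 2 * ((1 - α) * (θ * (Δk * (ε / 2)))) := by ring
      _ < 2 * (Lh * cpm * (M * cnp ^ 2 * Δk ^ 2)) := by linarith
      _ = (Δk * (2 * Lh * M * cpm * cnp ^ 2)) * Δk := by ring
  exact lt_of_mul_lt_mul_right hfin hΔk.le

lemma endgame0 (C : ℝ) (S : ℕ) (hC1 : 1 ≤ C) : (0:ℝ) ≤ Real.logb 2 C + S := by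
  have h1 := Real.logb_nonneg (by norm_num : (1:ℝ) < 2) hC1
  have h2 : (0:ℝ) ≤ (S:ℝ) := Nat.cast_nonneg S
  linarith

lemma endgame (Δbar Δ0 Δk C : ℝ) (U U' S' S : ℕ)
    (hΔbarpos : 0 < Δbar) (hΔ0pos : 0 < Δ0) (hCpos : 0 < C)
    (hprod : Δbar * C = 2 * Δ0) (hU1 : 1 ≤ U) (hcard : U ≤ U' + 1) (hsmono : S' ≤ S)
    (hkey : Δbar < Δk) (hcnt : Δk * 2 ^ U' ≤ Δ0 * 2 ^ S') :
    (U : ℝ) ≤ Real.logb 2 C + S := by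
  have hpow1 : (2:ℝ) ^ (U - 1) ≤ 2 ^ U' := pow_le_pow_right₀ one_le_two (by omega)
  have hmain : Δbar * 2 ^ (U - 1) < Δ0 * 2 ^ S := by
    calc Δbar * 2 ^ (U - 1) ≤ Δbar * 2 ^ U' := mul_le_mul_of_nonneg_left hpow1 hΔbarpos.le
      _ < Δk * 2 ^ U' := mul_lt_mul_of_pos_right hkey (by positivity)
      _ ≤ Δ0 * 2 ^ S' := hcnt
      _ ≤ Δ0 * 2 ^ S :=
          mul_le_mul_of_nonneg_left (pow_le_pow_right₀ one_le_two hsmono) hΔ0pos.le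
  have hsplit : (2:ℝ) ^ U = 2 ^ (U - 1) * 2 := by
    rw [← pow_succ]
    congr 1
    omega
  have h3 : Δbar * 2 ^ U < Δbar * (C * 2 ^ S) := by
    rw [hsplit]
    calc Δbar * (2 ^ (U - 1) * 2) = 2 * (Δbar * 2 ^ (U - 1)) := by ring
      _ < 2 * (Δ0 * 2 ^ S) := by linarith
      _ = (2 * Δ0) * 2 ^ S := by ring
      _ = (Δbar * C) * 2 ^ S := by rw [hprod]
      _ = Δbar * (C * 2 ^ S) := by ring
  have h2U : (2:ℝ) ^ U < C * 2 ^ S := lt_of_mul_lt_mul_left h3 hΔbarpos.le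
  have hlog := Real.logb_lt_logb (by norm_num : (1:ℝ) < 2) (by positivity) h2U
  rw [Real.logb_mul (ne_of_gt hCpos) (by positivity), Real.logb_pow, Real.logb_pow,
    Real.logb_self_eq_one (by norm_num)] at hlog
  linarith

set_option maxHeartbeats 2000000 in
/-- Lemma 3.7: bound on the number of iterations of types U² and U³. -/
theorem stmt12
    {n m : ℕ} (hn : 1 ≤ n) (hm : 1 ≤ m) (p : ℝ≥0∞) (hp : 1 ≤ p)
    (Ω : Set (Fin n → ℝ)) (hΩne : Ω.Nonempty) (hΩcl : IsClosed Ω) (hΩcv : Convex ℝ Ω)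
    (F : (Fin n → ℝ) → (Fin m → ℝ)) (J : (Fin n → ℝ) → Matrix (Fin m) (Fin n) ℝ)
    (hJ : ∀ y, HasFDerivAt F (LinearMap.toContinuousLinearMap (Matrix.mulVecLin (J y))) y)
    (LJ : ℝ) (hLJ : 0 < LJ)
    (hJLip : ∀ y z, opNorm2 (J y - J z) ≤ LJ * eucNorm (y - z))
    (h : (Fin m → ℝ) → ℝ) (hconv : ConvexOn ℝ Set.univ h)
    (Lh : ℝ) (hLh : 0 < Lh)
    (hhLip : ∀ z w, |h z - h w| ≤ Lh * pNorm p (z - w))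
    (cnp cpm : ℝ) (hcnp1 : 1 ≤ cnp) (hcpm1 : 1 ≤ cpm)
    (hcnp : ∀ v : Fin n → ℝ, eucNorm v ≤ cnp * pNorm p v)
    (hcpm : ∀ z : Fin m → ℝ, pNorm p z ≤ cpm * eucNorm z)
    (ε σ α θ Δstar : ℝ) (hε : 0 < ε) (hσ : 0 < σ)
    (hα0 : 0 < α) (hα1 : α < 1) (hθ0 : 0 < θ) (hθ1 : θ ≤ 1)
    (x : ℕ → Fin n → ℝ) (τ Δ : ℕ → ℝ) (A : ℕ → Matrix (Fin m) (Fin n) ℝ)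
    (d : ℕ → Fin n → ℝ) (ρ : ℕ → ℝ)
    (hrun : TRFDrun Ω F h p Lh cpm cnp ε σ α θ Δstar x τ Δ A d ρ)
    (T : ℕ) (hT1 : 1 ≤ T) (hT : ∀ k < T, ε < psi Ω F h J p Δstar (x k)) :
    (Set.ncard {k : ℕ | k < T ∧ ε / 2 ≤ eta Ω F h p Δstar (x k) (A k) ∧ ρ k < α} : ℝ) ≤
      Real.logb 2 (4 * Lh * max σ LJ * cpm * cnp ^ 2 * Δ 0 / ((1 - α) * θ) / ε) +
      (Set.ncard {k : ℕ | k < T ∧ ε / 2 ≤ eta Ω F h p Δstar (x k) (A k) ∧ α ≤ ρ k} : ℝ) := by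
  classical
  obtain ⟨hx0, hτ0eq, hΔ0low, hΔ0star, hA, hstep⟩ := hrun
  have hcnp0 : (0:ℝ) < cnp := lt_of_lt_of_le one_pos hcnp1
  have hcpm0 : (0:ℝ) < cpm := lt_of_lt_of_le one_pos hcpm1
  have h1α : (0:ℝ) < 1 - α := by linarith
  have hn0 : (0:ℝ) < (n:ℝ) := by exact_mod_cast Nat.lt_of_lt_of_le Nat.zero_lt_one hn
  have hsn : 0 < Real.sqrt n := Real.sqrt_pos.mpr hn0
  have hτ0 : 0 < τ 0 := by rw [hτ0eq]; positivity
  -- invariants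
  have hInv : ∀ k, x k ∈ Ω ∧ 0 < τ k ∧ τ k * Real.sqrt n ≤ Δ k ∧ Δ k ≤ Δstar := by
    intro k
    induction k with
    | zero => exact ⟨hx0, hτ0, hΔ0low, hΔ0star⟩
    | succ k ih =>
      obtain ⟨ihx, ihτ, ihτΔ, ihΔs⟩ := ih
      have hτsn : 0 < τ k * Real.sqrt n := mul_pos ihτ hsn
      have hΔkpos : 0 < Δ k := lt_of_lt_of_le hτsn ihτΔ
      rcases hstep k with ⟨_, hx', hΔ', hτ'⟩ | ⟨hη, hdp, hdΩ, hθd, hρd, hbr⟩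
      · refine ⟨hx' ▸ ihx, by rw [hτ']; linarith, ?_, by rw [hΔ']; exact ihΔs⟩
        rw [hτ', hΔ']
        have : τ k / 2 * Real.sqrt n = τ k * Real.sqrt n / 2 := by ring
        rw [this]; linarith
      · rcases hbr with ⟨hρα, hx', hΔ', hτ'⟩ | ⟨hρα, hhalf, hx', hΔ', hτ'⟩ |
          ⟨hρα, hhalf, hx', hΔ', hτ'⟩
        · refine ⟨by rw [hx']; exact hdΩ, by rw [hτ']; exact ihτ, ?_, ?_⟩
          · rw [hτ', hΔ']
            exact le_min (by linarith) (le_trans ihτΔ ihΔs)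
          · rw [hΔ']; exact min_le_right _ _
        · refine ⟨hx' ▸ ihx, by rw [hτ']; exact ihτ, ?_, by rw [hΔ']; linarith⟩
          rw [hτ', hΔ']; exact hhalf
        · refine ⟨hx' ▸ ihx, by rw [hτ']; linarith, ?_, by rw [hΔ']; linarith⟩
          rw [hτ', hΔ']
          have : τ k / 2 * Real.sqrt n = τ k * Real.sqrt n / 2 := by ring
          rw [this]; linarith
  have hΔpos : ∀ k, 0 < Δ k :=
    fun k => lt_of_lt_of_le (mul_pos (hInv k).2.1 hsn) (hInv k).2.2.1
  set M := max σ LJ with hMdef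
  have hMpos : 0 < M := lt_of_lt_of_le hσ (le_max_left _ _)
  set PU : ℕ → Prop := fun j => ε / 2 ≤ eta Ω F h p Δstar (x j) (A j) ∧ ρ j < α with hPUdef
  set PS : ℕ → Prop := fun j => ε / 2 ≤ eta Ω F h p Δstar (x j) (A j) ∧ α ≤ ρ j with hPSdef
  have hUeq : {k : ℕ | k < T ∧ ε / 2 ≤ eta Ω F h p Δstar (x k) (A k) ∧ ρ k < α}.ncard
      = cnt PU T := ncard_eq_cnt PU T
  have hSeq : {k : ℕ | k < T ∧ ε / 2 ≤ eta Ω F h p Δstar (x k) (A k) ∧ α ≤ ρ k}.ncard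
      = cnt PS T := ncard_eq_cnt PS T
  -- counting invariant
  have hcount : ∀ k, Δ k * 2 ^ (cnt PU k) ≤ Δ 0 * 2 ^ (cnt PS k) := by
    intro k
    induction k with
    | zero => simp [cnt]
    | succ k ih =>
      have hΔk := hΔpos k
      rcases hstep k with ⟨hηlt, hx', hΔ', hτ'⟩ | ⟨hη, hdp, hdΩ, hθd, hρd, hbr⟩
      · have hPUk : ¬ PU k := fun hc => by
          have : ε / 2 ≤ eta Ω F h p Δstar (x k) (A k) := hc.1; linarith [this]
        have hPSk : ¬ PS k := fun hc => by
          have : ε / 2 ≤ eta Ω F h p Δstar (x k) (A k) := hc.1; linarith [this]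
        rw [cnt_succ, cnt_succ, if_neg hPUk, if_neg hPSk, add_zero, add_zero, hΔ']
        exact ih
      · rcases hbr with ⟨hρα, hx', hΔ', hτ'⟩ | ⟨hρα, hhalf, hx', hΔ', hτ'⟩ |
          ⟨hρα, hhalf, hx', hΔ', hτ'⟩
        · have hPUk : ¬ PU k := fun hc => absurd hc.2 (not_lt.mpr hρα)
          have hPSk : PS k := ⟨hη, hρα⟩
          rw [cnt_succ, cnt_succ, if_neg hPUk, if_pos hPSk, add_zero, hΔ']
          calc min (2 * Δ k) Δstar * 2 ^ cnt PU k ≤ 2 * Δ k * 2 ^ cnt PU k :=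
                mul_le_mul_of_nonneg_right (min_le_left _ _) (by positivity)
            _ = 2 * (Δ k * 2 ^ cnt PU k) := by ring
            _ ≤ 2 * (Δ 0 * 2 ^ cnt PS k) := by linarith
            _ = Δ 0 * 2 ^ (cnt PS k + 1) := by rw [pow_succ]; ring
        · have hPUk : PU k := ⟨hη, hρα⟩
          have hPSk : ¬ PS k := fun hc => absurd hc.2 (not_le.mpr hρα)
          rw [cnt_succ, cnt_succ, if_pos hPUk, if_neg hPSk, add_zero, hΔ', pow_succ]
          calc Δ k / 2 * (2 ^ cnt PU k * 2) = Δ k * 2 ^ cnt PU k := by ring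
            _ ≤ Δ 0 * 2 ^ cnt PS k := ih
        · have hPUk : PU k := ⟨hη, hρα⟩
          have hPSk : ¬ PS k := fun hc => absurd hc.2 (not_le.mpr hρα)
          rw [cnt_succ, cnt_succ, if_pos hPUk, if_neg hPSk, add_zero, hΔ', pow_succ]
          calc Δ k / 2 * (2 ^ cnt PU k * 2) = Δ k * 2 ^ cnt PU k := by ring
            _ ≤ Δ 0 * 2 ^ cnt PS k := ih
  -- lower bound on Δ at U²/U³ iterations
  set Δbar := (1 - α) * θ * ε / (2 * Lh * M * cpm * cnp ^ 2) with hΔbardef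
  have hΔbarpos : 0 < Δbar := by
    apply div_pos (mul_pos (mul_pos h1α hθ0) hε)
    have h2 : (0:ℝ) < 2 := two_pos
    exact mul_pos (mul_pos (mul_pos (mul_pos h2 hLh) hMpos) hcpm0) (pow_pos hcnp0 2)
  have hkey : ∀ k, PU k → Δbar < Δ k := by
    intro k hPUk
    obtain ⟨hηk, hραk⟩ := hPUk
    rcases hstep k with ⟨hηlt, _, _, _⟩ | ⟨hη2, hdp, hdΩ, hθd, hρd, hbr⟩
    · linarith
    · have hAk := hA k
      rw [hΔbardef, hMdef]
      apply key_delta_bound hn hp hΩcv F J hJ LJ hLJ hJLip h hconv Lh hLh hhLip cnp cpm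
        hcnp1 hcpm1 hcnp hcpm ε σ α θ Δstar hε hσ hα1 hθ0 (x k) (hInv k).1 (τ k) (Δ k)
        (hInv k).2.1 (hInv k).2.2.1 (hΔpos k) (hInv k).2.2.2 (d k) hdp hdΩ
      · rw [← hAk]; exact hηk
      · rw [← hAk]; exact hθd
      · rw [← hAk, ← hρd]; exact hραk
  set C := 4 * Lh * M * cpm * cnp ^ 2 * Δ 0 / ((1 - α) * θ) / ε with hCdef
  have hΔ0pos : 0 < Δ 0 := hΔpos 0
  have hXpos : (0:ℝ) < 4 * Lh * M * cpm * cnp ^ 2 * Δ 0 := by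
    have h4 : (0:ℝ) < 4 := by norm_num
    exact mul_pos (mul_pos (mul_pos (mul_pos (mul_pos h4 hLh) hMpos) hcpm0)
      (pow_pos hcnp0 2)) hΔ0pos
  have hCpos : 0 < C := div_pos (div_pos hXpos (mul_pos h1α hθ0)) hε
  have hprod : Δbar * C = 2 * Δ 0 := by
    rw [hΔbardef, hCdef]
    field_simp
    ring
  have hΔ0ge : ε / (Lh * σ * cpm * cnp) ≤ Δ 0 := by
    have heq : τ 0 * Real.sqrt n = ε / (Lh * σ * cpm * cnp) := by
      rw [hτ0eq]
      field_simp
    rw [heq] at hΔ0low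
    exact hΔ0low
  have hC1 : 1 ≤ C := by
    rw [hCdef, div_div, one_le_div (mul_pos (mul_pos h1α hθ0) hε)]
    have e1 : (1 - α) * θ * ε ≤ ε := by
      have g2 : (1 - α) * θ ≤ 1 := by nlinarith
      nlinarith
    have e2 : ε ≤ 4 * Lh * M * cpm * cnp ^ 2 * Δ 0 := by
      have f0 : (0:ℝ) < 4 * Lh * M * cpm * cnp ^ 2 := by
        have h4 : (0:ℝ) < 4 := by norm_num
        exact mul_pos (mul_pos (mul_pos (mul_pos h4 hLh) hMpos) hcpm0) (pow_pos hcnp0 2)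
      have f1 : 4 * Lh * M * cpm * cnp ^ 2 * (ε / (Lh * σ * cpm * cnp))
          ≤ 4 * Lh * M * cpm * cnp ^ 2 * Δ 0 :=
        mul_le_mul_of_nonneg_left hΔ0ge (le_of_lt f0)
      have f2 : 4 * Lh * M * cpm * cnp ^ 2 * (ε / (Lh * σ * cpm * cnp))
          = 4 * (M / σ) * cnp * ε := by
        field_simp
      have f3 : ε ≤ 4 * (M / σ) * cnp * ε := by
        have hMσ : 1 ≤ M / σ := (one_le_div hσ).mpr (le_max_left σ LJ)
        have g1 : 1 * 1 * ε ≤ 4 * (M / σ) * cnp * ε := by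
          apply mul_le_mul_of_nonneg_right _ hε.le
          have g3 : (1:ℝ) ≤ 4 * (M / σ) := by linarith
          calc (1:ℝ) * 1 = 1 := by ring
            _ ≤ 4 * (M / σ) * cnp := by nlinarith
        linarith
      linarith
    linarith
  rw [hUeq, hSeq]
  by_cases hU0 : cnt PU T = 0
  · rw [hU0]
    simp only [Nat.cast_zero]
    exact endgame0 C _ hC1
  · have hUpos : 1 ≤ cnt PU T := Nat.one_le_iff_ne_zero.mpr hU0
    have hne : ((Finset.range T).filter PU).Nonempty := by
      rw [← Finset.card_pos]
      exact lt_of_lt_of_le zero_lt_one hUpos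
    set k₀ := ((Finset.range T).filter PU).max' hne with hk₀def
    have hk₀mem : k₀ ∈ (Finset.range T).filter PU := Finset.max'_mem _ hne
    rw [Finset.mem_filter, Finset.mem_range] at hk₀mem
    have hsubset : (Finset.range T).filter PU ⊆ insert k₀ ((Finset.range k₀).filter PU) := by
      intro j hj
      have hj' := hj
      rw [Finset.mem_filter, Finset.mem_range] at hj'
      rcases eq_or_lt_of_le (Finset.le_max' _ j hj) with he | hlt
      · rw [he]; exact Finset.mem_insert_self _ _
      · exact Finset.mem_insert_of_mem
          (by rw [Finset.mem_filter, Finset.mem_range]; exact ⟨hlt, hj'.2⟩)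
    have hcard : cnt PU T ≤ cnt PU k₀ + 1 := by
      calc cnt PU T ≤ (insert k₀ ((Finset.range k₀).filter PU)).card :=
            Finset.card_le_card hsubset
        _ ≤ cnt PU k₀ + 1 := Finset.card_insert_le _ _
    have hkey₀ : Δbar < Δ k₀ := hkey k₀ hk₀mem.2
    have hcnt₀ := hcount k₀
    have hsmono : cnt PS k₀ ≤ cnt PS T := cnt_mono _ (le_of_lt hk₀mem.1)
    exact endgame Δbar (Δ 0) (Δ k₀) C (cnt PU T) (cnt PU k₀) (cnt PS k₀) (cnt PS T)
      hΔbarpos hΔ0pos hCpos hprod hUpos hcard hsmono hkey₀ hcnt₀
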